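/- Let G be a group acting by graph automorphisms on a connected graph Γ with all vertex degrees bounded above by c (path metric). If the action is acylindrical and Γ is unbounded, then there is a uniform bound on the size of all vertex stabilisers. -/

import Mathlib

section Aux
variable {G V : Type*} [Group G] [MulAction G V] (Γ : SimpleGraph V)

lemma stmt11_dist_smul_le (hconn : Γ.Connected)
    (hact : ∀ (g : G) (u v : V), Γ.Adj (g • u) (g • v) ↔ Γ.Adj u v)
    (g : G) (x y : V) : Γ.dist (g • x) (g • y) ≤ Γ.dist x y := by
  obtain ⟨p, hp⟩ := (hconn x y).exists_walk_length_eq_dist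
  let f : Γ →g Γ := ⟨fun v => g • v, fun {a b} h => (hact g a b).mpr h⟩
  have h1 : Γ.dist (f x) (f y) ≤ (p.map f).length := SimpleGraph.dist_le _
  rw [p.length_map, hp] at h1
  exact h1

lemma stmt11_dist_smul (hconn : Γ.Connected)
    (hact : ∀ (g : G) (u v : V), Γ.Adj (g • u) (g • v) ↔ Γ.Adj u v)
    (g : G) (x y : V) : Γ.dist (g • x) (g • y) = Γ.dist x y := by
  refine le_antisymm (stmt11_dist_smul_le Γ hconn hact g x y) ?_
  have := stmt11_dist_smul_le Γ hconn hact g⁻¹ (g • x) (g • y)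
  simpa using this

/-- existence of points at each distance below a given one -/
lemma stmt11_exists_dist_eq (hconn : Γ.Connected) (v : V) :
    ∀ m : ℕ, ∀ y : V, Γ.dist v y = m → ∀ n ≤ m, ∃ w : V, Γ.dist v w = n := by
  intro m
  induction m with
  | zero => intro y _ n hn; exact ⟨v, by simpa [Nat.le_zero.mp hn] using (hconn.dist_eq_zero_iff (u := v) (v := v)).mpr rfl⟩
  | succ m ih =>
    intro y hy n hn
    rcases Nat.lt_or_ge n (m+1) with h | h
    · -- find neighbor u of y on a shortest walk y → v with dist v u = m
      have hyv : Γ.dist y v = m + 1 := by rw [SimpleGraph.dist_comm]; exact hy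
      obtain ⟨p, hp⟩ := (hconn y v).exists_walk_length_eq_dist
      cases p with
      | nil => rw [hyv] at hp; simp at hp
      | cons h' q =>
        rename_i u
        have hq : q.length = m := by simpa [hyv] using hp
        have h1 : Γ.dist u v ≤ m := hq ▸ SimpleGraph.dist_le q
        have h2 : m ≤ Γ.dist u v := by
          have hd : Γ.dist v y ≤ Γ.dist v u + Γ.dist u y := hconn.dist_triangle
          have : Γ.dist u y ≤ 1 := by
            simpa using SimpleGraph.dist_le (h'.symm.toWalk)
          have h3 : Γ.dist v u = Γ.dist u v := SimpleGraph.dist_comm ..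
          omega
        have hu : Γ.dist v u = m := by
          rw [SimpleGraph.dist_comm]; omega
        exact ih u hu n (by omega)
    · exact ⟨y, by omega⟩

end Aux

section Ball
variable {G V : Type*} [Group G] [MulAction G V] (Γ : SimpleGraph V)

lemma stmt11_ball_bound (hconn : Γ.Connected) (c : ℕ)
    (hdeg : ∀ v : V, (Γ.neighborSet v).Finite ∧ (Γ.neighborSet v).ncard ≤ c) (v : V) :
    ∀ R : ℕ, {w : V | Γ.dist v w ≤ R}.Finite ∧ {w : V | Γ.dist v w ≤ R}.ncard ≤ (c+1)^R := by
  classical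
  intro R
  induction R with
  | zero =>
    have : {w : V | Γ.dist v w ≤ 0} = {v} := by
      ext w
      simp [Nat.le_zero, hconn.dist_eq_zero_iff, eq_comm]
    rw [this]
    simp
  | succ R ih =>
    obtain ⟨hfin, hcard⟩ := ih
    -- ball (R+1) ⊆ ball R ∪ ⋃ u ∈ ball R, neighborSet u
    have hsub : {w : V | Γ.dist v w ≤ R + 1} ⊆
        {w : V | Γ.dist v w ≤ R} ∪ ⋃ u ∈ {w : V | Γ.dist v w ≤ R}, Γ.neighborSet u := by
      intro w hw
      rcases Nat.lt_or_ge (Γ.dist v w) (R+1) with h | h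
      · exact Or.inl (by simpa using Nat.lt_succ_iff.mp h)
      · have hd : Γ.dist v w = R + 1 := le_antisymm hw h
        have hwv : Γ.dist w v = R + 1 := by rw [SimpleGraph.dist_comm]; exact hd
        obtain ⟨p, hp⟩ := (hconn w v).exists_walk_length_eq_dist
        cases p with
        | nil => rw [hwv] at hp; simp at hp
        | cons h' q =>
          rename_i u
          have hq : q.length = R := by simpa [hwv] using hp
          have h1 : Γ.dist u v ≤ R := hq ▸ SimpleGraph.dist_le q
          have hu : Γ.dist v u ≤ R := by rw [SimpleGraph.dist_comm]; exact h1
          refine Or.inr ?_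
          exact Set.mem_biUnion hu h'.symm
    -- count
    have hN : ∀ u, (Γ.neighborSet u).Finite := fun u => (hdeg u).1
    set bigU := ⋃ u ∈ {w : V | Γ.dist v w ≤ R}, Γ.neighborSet u with hbigU
    have hUfin : bigU.Finite := Set.Finite.biUnion hfin (fun u _ => hN u)
    have hfin' : {w : V | Γ.dist v w ≤ R + 1}.Finite := (hfin.union hUfin).subset hsub
    refine ⟨hfin', ?_⟩
    have hUeq : bigU = ↑(hfin.toFinset.biUnion (fun u => (hN u).toFinset)) := by
      rw [hbigU]
      ext w
      simp
    have hUcard : bigU.ncard ≤ {w : V | Γ.dist v w ≤ R}.ncard * c := by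
      rw [hUeq, Set.ncard_coe_finset]
      calc (hfin.toFinset.biUnion (fun u => (hN u).toFinset)).card
          ≤ ∑ u ∈ hfin.toFinset, ((hN u).toFinset).card := Finset.card_biUnion_le
        _ ≤ ∑ _u ∈ hfin.toFinset, c := Finset.sum_le_sum (fun u _ => by
            have := (hdeg u).2
            rwa [Set.ncard_eq_toFinset_card _ (hN u)] at this)
        _ = hfin.toFinset.card * c := by rw [Finset.sum_const, smul_eq_mul]
        _ = {w : V | Γ.dist v w ≤ R}.ncard * c := by rw [Set.ncard_eq_toFinset_card _ hfin]
    calc {w : V | Γ.dist v w ≤ R + 1}.ncard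
        ≤ ({w : V | Γ.dist v w ≤ R} ∪ bigU).ncard :=
          Set.ncard_le_ncard hsub (hfin.union hUfin)
      _ ≤ {w : V | Γ.dist v w ≤ R}.ncard + bigU.ncard := Set.ncard_union_le ..
      _ ≤ (c+1)^R + (c+1)^R * c := by
          have := Nat.mul_le_mul_right c hcard
          omega
      _ = (c+1)^(R+1) := by ring

end Ball


/-- An acylindrical action by automorphisms on an unbounded connected bounded-valence
graph has a uniform bound on the sizes of vertex stabilisers. -/
theorem stmt11 {G V : Type*} [Group G] [MulAction G V]
    (Γ : SimpleGraph V) (hconn : Γ.Connected)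
    (c : ℕ) (hdeg : ∀ v : V, (Γ.neighborSet v).Finite ∧ (Γ.neighborSet v).ncard ≤ c)
    (hact : ∀ (g : G) (u v : V), Γ.Adj (g • u) (g • v) ↔ Γ.Adj u v)
    (hacyl : ∀ ε : ℕ, ∃ R N : ℕ, ∀ x y : V, R ≤ Γ.dist x y →
      {g : G | Γ.dist (g • x) x ≤ ε ∧ Γ.dist (g • y) y ≤ ε}.Finite ∧
      {g : G | Γ.dist (g • x) x ≤ ε ∧ Γ.dist (g • y) y ≤ ε}.ncard ≤ N)
    (hunbdd : ∀ n : ℕ, ∃ x y : V, n ≤ Γ.dist x y) :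
    ∃ B : ℕ, ∀ v : V, {g : G | g • v = v}.Finite ∧ {g : G | g • v = v}.ncard ≤ B := by
  classical
  obtain ⟨R, N, hRN⟩ := hacyl 0
  refine ⟨(c+1)^R * N, fun v => ?_⟩
  -- find a point at distance exactly R from v
  obtain ⟨x, y, hxy⟩ := hunbdd (2 * R)
  have htri : Γ.dist x y ≤ Γ.dist x v + Γ.dist v y := hconn.dist_triangle
  have hx' : Γ.dist v x = Γ.dist x v := SimpleGraph.dist_comm ..
  have hbig : ∃ z, R ≤ Γ.dist v z := by
    rcases Nat.le_or_le (Γ.dist x v) R with h | h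
    · exact ⟨y, by omega⟩
    · exact ⟨x, by omega⟩
  obtain ⟨z, hz⟩ := hbig
  obtain ⟨w0, hw0⟩ := stmt11_exists_dist_eq Γ hconn v (Γ.dist v z) z rfl R hz
  -- fixed-pair set from acylindricity
  obtain ⟨hFfin, hFcard⟩ := hRN v w0 (le_of_eq hw0.symm)
  set F : Set G := {g : G | Γ.dist (g • v) v ≤ 0 ∧ Γ.dist (g • w0) w0 ≤ 0} with hFdef
  -- ball around v
  obtain ⟨hSfin, hScard⟩ := stmt11_ball_bound Γ hconn c hdeg v R
  set S : Set V := {w : V | Γ.dist v w ≤ R} with hSdef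
  -- representative choice
  let rep : V → G := fun u => if h : ∃ k : G, k • v = v ∧ k • w0 = u then h.choose else 1
  have hrep : ∀ u : V, (∃ k : G, k • v = v ∧ k • w0 = u) →
      (rep u) • v = v ∧ (rep u) • w0 = u := by
    intro u h
    simp only [rep, dif_pos h]
    exact h.choose_spec
  let f : G → V × G := fun g => (g • w0, (rep (g • w0))⁻¹ * g)
  have hmaps : ∀ g ∈ {g : G | g • v = v}, f g ∈ S ×ˢ F := by
    intro g hg
    have hgv : g • v = v := hg
    have hex : ∃ k : G, k • v = v ∧ k • w0 = g • w0 := ⟨g, hgv, rfl⟩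
    obtain ⟨h1, h2⟩ := hrep _ hex
    constructor
    · show Γ.dist v (g • w0) ≤ R
      have := stmt11_dist_smul Γ hconn hact g v w0
      rw [hgv] at this
      omega
    · show Γ.dist (((rep (g • w0))⁻¹ * g) • v) v ≤ 0 ∧
        Γ.dist (((rep (g • w0))⁻¹ * g) • w0) w0 ≤ 0
      constructor
      · have : ((rep (g • w0))⁻¹ * g) • v = v := by
          rw [mul_smul, hgv, inv_smul_eq_iff]
          exact h1.symm
        rw [this]
        simp [(hconn.dist_eq_zero_iff (u := v) (v := v)).mpr rfl]
      · have : ((rep (g • w0))⁻¹ * g) • w0 = w0 := by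
          rw [mul_smul, inv_smul_eq_iff]
          exact h2.symm
        rw [this]
        simp [(hconn.dist_eq_zero_iff (u := w0) (v := w0)).mpr rfl]
  have hinj : Set.InjOn f {g : G | g • v = v} := by
    intro g hg g' hg' hfe
    have h1 : g • w0 = g' • w0 := congrArg Prod.fst hfe
    have h2 : (rep (g • w0))⁻¹ * g = (rep (g' • w0))⁻¹ * g' := congrArg Prod.snd hfe
    rw [h1] at h2
    exact mul_left_cancel h2
  have htfin : (S ×ˢ F).Finite := hSfin.prod hFfin
  have hfin : {g : G | g • v = v}.Finite := by
    have himg : (f '' {g : G | g • v = v}).Finite := htfin.subset (Set.image_subset_iff.mpr hmaps)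
    exact Set.Finite.of_finite_image himg hinj
  refine ⟨hfin, ?_⟩
  calc {g : G | g • v = v}.ncard ≤ (S ×ˢ F).ncard :=
        Set.ncard_le_ncard_of_injOn f hmaps hinj htfin
    _ = (hSfin.toFinset ×ˢ hFfin.toFinset).card := by
        rw [Set.ncard_eq_toFinset_card _ htfin, Set.Finite.toFinset_prod]
    _ = hSfin.toFinset.card * hFfin.toFinset.card := Finset.card_product ..
    _ ≤ (c+1)^R * N := by
        have h1 : hSfin.toFinset.card = S.ncard := (Set.ncard_eq_toFinset_card _ hSfin).symm
        have h2 : hFfin.toFinset.card = F.ncard := (Set.ncard_eq_toFinset_card _ hFfin).symm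
        rw [h1, h2]
        exact Nat.mul_le_mul hScard hFcard
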